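/- Let d be even with d ≥ 2, let μ be the Haar probability measure on the unitary group U(d) = Matrix.unitaryGroup (Fin d) ℂ, and let P : Matrix (Fin d) (Fin d) ℂ be an orthogonal projector of rank d/2. Then ∫ U, ∫ V, ‖U P U† − V P V†‖_F dμ(V) dμ(U) ≥ sqrt(d) / 2, where ‖·‖_F denotes the Frobenius (Hilbert–Schmidt) norm. -/

import Mathlib

open MeasureTheory
open scoped Matrix

noncomputable instance matrixMeasurableSpace {m n : Type*} : MeasurableSpace (Matrix m n ℂ) :=
  (inferInstance : MeasurableSpace (m → n → ℂ))

noncomputable def frobNorm {ι : Type*} [Fintype ι] (A : Matrix ι ι ℂ) : ℝ :=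
  Real.sqrt (∑ x, ∑ y, ‖A x y‖ ^ 2)

/-! ### Auxiliary instances -/

instance matrixBorelSpace {m n : Type*} [Countable m] [Countable n] :
    BorelSpace (Matrix m n ℂ) :=
  (inferInstance : BorelSpace (m → n → ℂ))

instance matrixSC {m n : Type*} [Countable m] [Countable n] :
    SecondCountableTopology (Matrix m n ℂ) :=
  (inferInstance : SecondCountableTopology (m → n → ℂ))

instance unitaryBorel {d : ℕ} : BorelSpace (Matrix.unitaryGroup (Fin d) ℂ) :=
  Subtype.borelSpace _

instance unitarySC {d : ℕ} : SecondCountableTopology (Matrix.unitaryGroup (Fin d) ℂ) :=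
  TopologicalSpace.secondCountableTopology_induced _ _ Subtype.val

/-! ### Algebraic lemmas -/

section Alg

variable {d : ℕ}

lemma trace_conj_re (M : Matrix (Fin d) (Fin d) ℂ) :
    ((Mᴴ * M).trace).re = ∑ x, ∑ y, ‖M x y‖ ^ 2 := by
  have h : ((Mᴴ * M).trace).re = ∑ i, ∑ j, ‖M j i‖ ^ 2 := by
    simp only [Matrix.trace, Matrix.diag, Matrix.mul_apply, Matrix.conjTranspose_apply]
    rw [Complex.re_sum]
    refine Finset.sum_congr rfl fun i _ => ?_
    rw [Complex.re_sum]
    refine Finset.sum_congr rfl fun j _ => ?_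
    rw [Complex.sq_norm, mul_comm]
    have h2 := Complex.mul_conj (M j i)
    calc ((M j i) * star (M j i)).re = ((M j i) * (starRingEnd ℂ) (M j i)).re := rfl
      _ = Complex.normSq (M j i) := by rw [h2, Complex.ofReal_re]
  rw [h, Finset.sum_comm]

lemma frobNorm_eq_trace (M : Matrix (Fin d) (Fin d) ℂ) :
    frobNorm M = Real.sqrt (((Mᴴ * M).trace).re) := by
  unfold frobNorm
  rw [trace_conj_re]

lemma trace_re_nonneg (M : Matrix (Fin d) (Fin d) ℂ) :
    0 ≤ ((Mᴴ * M).trace).re := by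
  rw [trace_conj_re]
  positivity

variable {P : Matrix (Fin d) (Fin d) ℂ}

/-- The correlation trace is nonnegative. -/
lemma corr_nonneg (hP1 : Pᴴ = P) (hP2 : P * P = P) (W : Matrix (Fin d) (Fin d) ℂ) :
    0 ≤ ((P * W * P * Wᴴ).trace).re := by
  have hPP : ∀ X : Matrix (Fin d) (Fin d) ℂ, P * (P * X) = P * X := fun X => by
    rw [← Matrix.mul_assoc, hP2]
  have hCH : (P * W * P)ᴴ = P * Wᴴ * P := by
    simp [Matrix.conjTranspose_mul, hP1, Matrix.mul_assoc]
  have key : ((P * W * P)ᴴ * (P * W * P)).trace = (P * W * P * Wᴴ).trace := by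
    rw [hCH]
    calc ((P * Wᴴ * P) * (P * W * P)).trace
        = (P * (Wᴴ * (P * (P * (W * P))))).trace := by simp only [Matrix.mul_assoc]
      _ = (P * (Wᴴ * (P * (W * P)))).trace := by rw [hPP]
      _ = ((P * Wᴴ) * ((P * W) * P)).trace := by simp only [Matrix.mul_assoc]
      _ = (((P * W) * P) * (P * Wᴴ)).trace := Matrix.trace_mul_comm _ _
      _ = (P * (W * (P * (P * Wᴴ)))).trace := by simp only [Matrix.mul_assoc]
      _ = (P * (W * (P * Wᴴ))).trace := by rw [hPP]
      _ = (P * W * P * Wᴴ).trace := by simp only [Matrix.mul_assoc]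
  rw [← key]
  exact trace_re_nonneg _

/-- Trace expansion of the squared Frobenius distance. -/
lemma trace_expand (hP1 : Pᴴ = P) (hP2 : P * P = P)
    {W : Matrix (Fin d) (Fin d) ℂ} (hW : Wᴴ * W = 1) :
    (((P - W * P * Wᴴ)ᴴ * (P - W * P * Wᴴ)).trace) =
      P.trace + P.trace - ((P * W * P * Wᴴ).trace + (P * W * P * Wᴴ).trace) := by
  have hQH : (W * P * Wᴴ)ᴴ = W * P * Wᴴ := by
    simp [Matrix.conjTranspose_mul, hP1, Matrix.mul_assoc]
  have hQQ : (W * P * Wᴴ) * (W * P * Wᴴ) = W * P * Wᴴ := by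
    calc (W * P * Wᴴ) * (W * P * Wᴴ) = W * (P * ((Wᴴ * W) * (P * Wᴴ))) := by
          simp only [Matrix.mul_assoc]
      _ = W * (P * (P * Wᴴ)) := by rw [hW, one_mul]
      _ = W * ((P * P) * Wᴴ) := by simp only [Matrix.mul_assoc]
      _ = W * P * Wᴴ := by rw [hP2, Matrix.mul_assoc]
  have htrQ : (W * P * Wᴴ).trace = P.trace := by
    rw [Matrix.trace_mul_cycle, hW, one_mul]
  have htrQP : ((W * P * Wᴴ) * P).trace = (P * W * P * Wᴴ).trace := by
    rw [Matrix.trace_mul_comm]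
    simp only [Matrix.mul_assoc]
  have htrPQ : (P * (W * P * Wᴴ)).trace = (P * W * P * Wᴴ).trace := by
    simp only [Matrix.mul_assoc]
  rw [Matrix.conjTranspose_sub, hP1, hQH, Matrix.sub_mul, Matrix.mul_sub, Matrix.mul_sub,
    Matrix.trace_sub, Matrix.trace_sub, Matrix.trace_sub, hP2, hQQ, htrQ, htrQP, htrPQ]
  ring

/-- Conjugation by a unitary that maps `P` to `1 - P`. -/
lemma corr_conj (hP1 : Pᴴ = P) (hP2 : P * P = P)
    {X W : Matrix (Fin d) (Fin d) ℂ} (hX : Xᴴ * P * X = 1 - P) (hW : Wᴴ * W = 1) :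
    (P * (X * W) * P * (X * W)ᴴ).trace = P.trace - (P * W * P * Wᴴ).trace := by
  have htrQ : (W * P * Wᴴ).trace = P.trace := by
    rw [Matrix.trace_mul_cycle, hW, one_mul]
  have h1 : (X * W)ᴴ = Wᴴ * Xᴴ := Matrix.conjTranspose_mul _ _
  have h2 : P * (X * W) * P * (X * W)ᴴ = (P * X * W * P * Wᴴ) * Xᴴ := by
    rw [h1]; simp only [Matrix.mul_assoc]
  rw [h2, Matrix.trace_mul_comm]
  have h3 : Xᴴ * (P * X * W * P * Wᴴ) = ((Xᴴ * P * X) * W * P * Wᴴ) := by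
    simp only [Matrix.mul_assoc]
  rw [h3, hX, Matrix.sub_mul, Matrix.sub_mul, Matrix.sub_mul, one_mul, Matrix.trace_sub, htrQ]

/-- Frobenius norm is invariant under unitary conjugation. -/
lemma frobNorm_conj {U M : Matrix (Fin d) (Fin d) ℂ} (hU : Uᴴ * U = 1) :
    frobNorm (U * M * Uᴴ) = frobNorm M := by
  rw [frobNorm_eq_trace, frobNorm_eq_trace]
  have h : ((U * M * Uᴴ)ᴴ * (U * M * Uᴴ)).trace = (Mᴴ * M).trace := by
    have h1 : (U * M * Uᴴ)ᴴ = U * Mᴴ * Uᴴ := by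
      simp [Matrix.conjTranspose_mul, Matrix.mul_assoc]
    rw [h1]
    have h2 : (U * Mᴴ * Uᴴ) * (U * M * Uᴴ) = U * (Mᴴ * ((Uᴴ * U) * (M * Uᴴ))) := by
      simp only [Matrix.mul_assoc]
    rw [h2, hU, one_mul, Matrix.trace_mul_comm]
    rw [Matrix.mul_assoc, Matrix.mul_assoc, hU, mul_one]
  rw [h]

end Alg

/-! ### Existence of a unitary conjugating `P` to `1 - P` -/

lemma exists_conj_compl {d : ℕ} (P : Matrix (Fin d) (Fin d) ℂ)
    (hP1 : Pᴴ = P) (hP2 : P * P = P) (hPr : (P.trace).re = (d : ℝ) / 2) :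
    ∃ X : Matrix.unitaryGroup (Fin d) ℂ,
      (X : Matrix (Fin d) (Fin d) ℂ)ᴴ * P * (X : Matrix (Fin d) (Fin d) ℂ) = 1 - P := by
  classical
  have hP : P.IsHermitian := hP1
  set u : Matrix (Fin d) (Fin d) ℂ := ↑hP.eigenvectorUnitary with hu_def
  have huu : uᴴ * u = 1 := by
    have := (Unitary.mem_iff.mp hP.eigenvectorUnitary.2).1
    rwa [Matrix.star_eq_conjTranspose] at this
  have huu2 : u * uᴴ = 1 := by
    have := (Unitary.mem_iff.mp hP.eigenvectorUnitary.2).2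
    rwa [Matrix.star_eq_conjTranspose] at this
  set φ : Fin d → ℝ := hP.eigenvalues with hφ_def
  set g : Fin d → ℂ := fun i => ((φ i : ℝ) : ℂ) with hg_def
  have hspec : P = u * Matrix.diagonal g * uᴴ := by
    have := hP.spectral_theorem
    rw [Unitary.conjStarAlgAut_apply, Matrix.star_eq_conjTranspose] at this
    exact this
  -- eigenvalues are 0 or 1
  have hD : Matrix.diagonal g * Matrix.diagonal g = Matrix.diagonal g := by
    have h1 : uᴴ * P * u = Matrix.diagonal g := by
      rw [hspec]
      calc uᴴ * (u * Matrix.diagonal g * uᴴ) * u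
          = (uᴴ * u) * (Matrix.diagonal g * (uᴴ * u)) := by simp only [Matrix.mul_assoc]
        _ = Matrix.diagonal g := by rw [huu, one_mul, mul_one]
    calc Matrix.diagonal g * Matrix.diagonal g
        = (uᴴ * P * u) * (uᴴ * P * u) := by rw [h1]
      _ = uᴴ * (P * ((u * uᴴ) * (P * u))) := by simp only [Matrix.mul_assoc]
      _ = uᴴ * (P * (P * u)) := by rw [huu2, one_mul]
      _ = uᴴ * ((P * P) * u) := by simp only [Matrix.mul_assoc]
      _ = uᴴ * (P * u) := by rw [hP2]
      _ = uᴴ * P * u := by rw [Matrix.mul_assoc]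
      _ = Matrix.diagonal g := h1
  have hφ01 : ∀ i, φ i = 0 ∨ φ i = 1 := by
    intro i
    rw [Matrix.diagonal_mul_diagonal] at hD
    have h := (Matrix.diagonal_eq_diagonal_iff).mp hD i
    simp only [hg_def] at h
    have h2 : (φ i) * (φ i) = φ i := by exact_mod_cast h
    rcases mul_eq_zero.mp (show φ i * (φ i - 1) = 0 by ring_nf; nlinarith) with h' | h'
    · exact Or.inl h'
    · exact Or.inr (by linarith)
  -- the trace determines the number of unit eigenvalues
  have htr : ∑ i, φ i = (d : ℝ) / 2 := by
    have h1 : P.trace = ∑ i, g i := by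
      rw [hspec, Matrix.trace_mul_cycle, huu, one_mul, Matrix.trace_diagonal]
    have h2 : (P.trace).re = ∑ i, φ i := by
      rw [h1, Complex.re_sum]
      simp [hg_def]
    rw [← h2, hPr]
  set p : Fin d → Prop := fun i => φ i = 1 with hp_def
  set s : Finset (Fin d) := Finset.univ.filter p with hs_def
  have hmem : ∀ i, i ∈ s ↔ p i := by intro i; simp [hs_def]
  have hmemc : ∀ i, i ∈ sᶜ ↔ ¬ p i := by intro i; simp [hs_def]
  have hcards : (s.card : ℝ) = (d : ℝ) / 2 := by
    have h1 : ∑ i, φ i = ∑ i ∈ s, (1 : ℝ) := by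
      rw [hs_def, Finset.sum_filter]
      refine Finset.sum_congr rfl fun i _ => ?_
      rcases hφ01 i with h | h <;> simp [hp_def, h]
    have h2 : (∑ i ∈ s, (1 : ℝ)) = s.card := by simp
    rw [← h2, ← h1, htr]
  have hcard_le : s.card ≤ d := by simpa using s.card_le_univ
  have hcompl : sᶜ.card = s.card := by
    have h1 : (sᶜ.card : ℝ) = (d : ℝ) - s.card := by
      rw [Finset.card_compl, Fintype.card_fin, Nat.cast_sub hcard_le]
    have h2 : (sᶜ.card : ℝ) = (s.card : ℝ) := by rw [h1, hcards]; linarith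
    exact_mod_cast h2
  let e0 : {x // x ∈ s} ≃ {x // x ∈ sᶜ} := Finset.equivOfCardEq hcompl.symm
  let e : {x // p x} ≃ {x // ¬ p x} :=
    ((Equiv.subtypeEquivRight fun x => (hmem x).symm).trans e0).trans
      (Equiv.subtypeEquivRight fun x => hmemc x)
  let σ : Equiv.Perm (Fin d) :=
    ((Equiv.sumCompl p).symm.trans ((e.sumCongr e.symm).trans
      ((Equiv.sumComm _ _).trans (Equiv.sumCompl p))))
  have hσ : ∀ i, φ (σ i) = 1 - φ i := by
    intro i
    by_cases h : p i
    · have hσi : σ i = ↑(e ⟨i, h⟩) := by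
        simp only [σ, Equiv.trans_apply, Equiv.sumCompl_symm_apply_of_pos h,
          Equiv.sumCongr_apply, Sum.map_inl, Equiv.sumComm_apply, Sum.swap_inl,
          Equiv.sumCompl_apply_inr]
      have : ¬ p (σ i) := by rw [hσi]; exact (e ⟨i, h⟩).2
      have h0 : φ (σ i) = 0 := by
        rcases hφ01 (σ i) with h' | h'
        · exact h'
        · exact absurd h' this
      rw [h0, h]; ring
    · have hσi : σ i = ↑(e.symm ⟨i, h⟩) := by
        simp only [σ, Equiv.trans_apply, Equiv.sumCompl_symm_apply_of_neg h,
          Equiv.sumCongr_apply, Sum.map_inr, Equiv.sumComm_apply, Sum.swap_inr,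
          Equiv.sumCompl_apply_inl]
      have hp' : p (σ i) := by rw [hσi]; exact (e.symm ⟨i, h⟩).2
      have h0 : φ i = 0 := by
        rcases hφ01 i with h' | h'
        · exact h'
        · exact absurd h' h
      rw [hp' , h0]; ring
  have hσ' : ∀ i, φ (σ.symm i) = 1 - φ i := by
    intro i
    have := hσ (σ.symm i)
    rw [Equiv.apply_symm_apply] at this
    linarith
  -- permutation matrix
  set Z : Matrix (Fin d) (Fin d) ℂ :=
    Matrix.of (fun i j => if j = σ.symm i then (1 : ℂ) else 0) with hZ_def
  have hperm : ∀ gg : Fin d → ℂ,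
      Z * Matrix.diagonal gg * Zᴴ = Matrix.diagonal (fun i => gg (σ.symm i)) := by
    intro gg
    ext i j
    have hentry : ∀ k : Fin d,
        Z i k * gg k * star (Z j k) =
          if k = σ.symm i then gg k * star (Z j k) else 0 := by
      intro k
      simp only [hZ_def, Matrix.of_apply]
      split <;> simp
    calc (Z * Matrix.diagonal gg * Zᴴ) i j
        = ∑ k, Z i k * gg k * star (Z j k) := by
          rw [Matrix.mul_apply]
          simp only [Matrix.mul_diagonal, Matrix.conjTranspose_apply]
      _ = ∑ k, if k = σ.symm i then gg k * star (Z j k) else 0 :=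
          Finset.sum_congr rfl fun k _ => hentry k
      _ = gg (σ.symm i) * star (Z j (σ.symm i)) := by
          rw [Finset.sum_ite_eq']; simp
      _ = Matrix.diagonal (fun i => gg (σ.symm i)) i j := by
          by_cases hij : i = j
          · subst hij
            simp [hZ_def, Matrix.diagonal_apply_eq]
          · have hne : σ.symm i ≠ σ.symm j := fun hc => hij (σ.symm.injective hc)
            rw [Matrix.diagonal_apply_ne _ hij]
            simp [hZ_def, hne]
  have hZZ : Z * Zᴴ = 1 := by
    have := hperm (fun _ => (1 : ℂ))
    rw [Matrix.diagonal_one, mul_one] at this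
    rw [this, ← Matrix.diagonal_one]
  have hZZ' : Zᴴ * Z = 1 := mul_eq_one_comm.mp hZZ
  set X : Matrix (Fin d) (Fin d) ℂ := u * Zᴴ * uᴴ with hX_def
  have hXmem : X ∈ Matrix.unitaryGroup (Fin d) ℂ := by
    rw [Matrix.mem_unitaryGroup_iff, Matrix.star_eq_conjTranspose]
    have hXH : Xᴴ = u * Z * uᴴ := by
      rw [hX_def]
      simp [Matrix.conjTranspose_mul, Matrix.mul_assoc]
    rw [hXH, hX_def]
    calc (u * Zᴴ * uᴴ) * (u * Z * uᴴ)
        = u * (Zᴴ * ((uᴴ * u) * (Z * uᴴ))) := by simp only [Matrix.mul_assoc]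
      _ = u * ((Zᴴ * Z) * uᴴ) := by rw [huu, one_mul, Matrix.mul_assoc]
      _ = u * uᴴ := by rw [hZZ', one_mul]
      _ = 1 := huu2
  refine ⟨⟨X, hXmem⟩, ?_⟩
  show Xᴴ * P * X = 1 - P
  have hXH : Xᴴ = u * Z * uᴴ := by
    rw [hX_def]
    simp [Matrix.conjTranspose_mul, Matrix.mul_assoc]
  have hgσ : (fun i => g (σ.symm i)) = fun i => 1 - g i := by
    funext i
    rw [hg_def]
    simp only
    rw [hσ' i]
    push_cast
    ring
  have hdsub : Matrix.diagonal (fun i => (1 : ℂ) - g i) = 1 - Matrix.diagonal g := by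
    rw [← Matrix.diagonal_one, ← Matrix.diagonal_sub]
  calc Xᴴ * P * X
      = (u * Z * uᴴ) * (u * Matrix.diagonal g * uᴴ) * (u * Zᴴ * uᴴ) := by
        rw [hXH, ← hspec, hX_def]
    _ = u * (Z * ((uᴴ * u) * (Matrix.diagonal g * ((uᴴ * u) * (Zᴴ * uᴴ))))) := by
        simp only [Matrix.mul_assoc]
    _ = u * (Z * (Matrix.diagonal g * (Zᴴ * uᴴ))) := by rw [huu, one_mul, one_mul]
    _ = u * (Z * Matrix.diagonal g * Zᴴ) * uᴴ := by simp only [Matrix.mul_assoc]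
    _ = u * Matrix.diagonal (fun i => g (σ.symm i)) * uᴴ := by rw [hperm]
    _ = u * (1 - Matrix.diagonal g) * uᴴ := by rw [hgσ, hdsub]
    _ = u * uᴴ - u * Matrix.diagonal g * uᴴ := by
        rw [Matrix.mul_sub, Matrix.sub_mul, mul_one]
    _ = 1 - P := by rw [huu2, ← hspec]

/-! ### Main theorem -/

/-- Lower bound on the Haar average of the Frobenius distance between two
independent random rotations of a rank-`d/2` projector. -/
theorem haar_average_frobenius_lower
    {d : ℕ} (hd : 2 ≤ d) (hdeven : 2 ∣ d)
    (μ : Measure (Matrix.unitaryGroup (Fin d) ℂ))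
    [μ.IsHaarMeasure] [IsProbabilityMeasure μ]
    (P : Matrix (Fin d) (Fin d) ℂ)
    (hP1 : Pᴴ = P) (hP2 : P * P = P) (hPr : (P.trace).re = (d : ℝ) / 2) :
    (∫ U : Matrix.unitaryGroup (Fin d) ℂ, ∫ V : Matrix.unitaryGroup (Fin d) ℂ,
        frobNorm ((U : Matrix (Fin d) (Fin d) ℂ) * P * (U : Matrix (Fin d) (Fin d) ℂ)ᴴ -
          (V : Matrix (Fin d) (Fin d) ℂ) * P * (V : Matrix (Fin d) (Fin d) ℂ)ᴴ) ∂μ ∂μ) ≥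
      Real.sqrt (d : ℝ) / 2 := by
  classical
  have hcoeH : ∀ W : Matrix.unitaryGroup (Fin d) ℂ,
      ((W : Matrix (Fin d) (Fin d) ℂ))ᴴ * (W : Matrix (Fin d) (Fin d) ℂ) = 1 := by
    intro W
    have := (Unitary.mem_iff.mp W.2).1
    rwa [Matrix.star_eq_conjTranspose] at this
  have hcoeH2 : ∀ W : Matrix.unitaryGroup (Fin d) ℂ,
      (W : Matrix (Fin d) (Fin d) ℂ) * ((W : Matrix (Fin d) (Fin d) ℂ))ᴴ = 1 := by
    intro W
    have := (Unitary.mem_iff.mp W.2).2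
    rwa [Matrix.star_eq_conjTranspose] at this
  have hd0 : (0 : ℝ) < d := by
    have : (2 : ℝ) ≤ d := by exact_mod_cast hd
    linarith
  set t : Matrix.unitaryGroup (Fin d) ℂ → ℝ := fun W =>
    ((P * (W : Matrix (Fin d) (Fin d) ℂ) * P *
      ((W : Matrix (Fin d) (Fin d) ℂ))ᴴ).trace).re with ht_def
  have ht0 : ∀ W, 0 ≤ t W := fun W => corr_nonneg hP1 hP2 _
  have hN : ∀ W : Matrix.unitaryGroup (Fin d) ℂ,
      (((P - (W : Matrix (Fin d) (Fin d) ℂ) * P * ((W : Matrix (Fin d) (Fin d) ℂ))ᴴ)ᴴ *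
        (P - (W : Matrix (Fin d) (Fin d) ℂ) * P *
          ((W : Matrix (Fin d) (Fin d) ℂ))ᴴ)).trace).re = (d : ℝ) - 2 * t W := by
    intro W
    rw [trace_expand hP1 hP2 (hcoeH W)]
    simp only [Complex.sub_re, Complex.add_re, ht_def]
    rw [hPr]; ring
  have hN0 : ∀ W, 0 ≤ (d : ℝ) - 2 * t W := fun W => by
    rw [← hN W]; exact trace_re_nonneg _
  have htd : ∀ W, t W ≤ (d : ℝ) / 2 := fun W => by have := hN0 W; linarith
  have hcont_coe : Continuous
      (fun W : Matrix.unitaryGroup (Fin d) ℂ => (W : Matrix (Fin d) (Fin d) ℂ)) :=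
    continuous_subtype_val
  have ht_cont : Continuous t := by
    apply Complex.continuous_re.comp
    apply Continuous.matrix_trace
    exact ((continuous_const.matrix_mul hcont_coe).matrix_mul continuous_const).matrix_mul
      hcont_coe.matrix_conjTranspose
  have ht_int : Integrable t μ := by
    refine Integrable.mono' (integrable_const ((d : ℝ) / 2)) ht_cont.aestronglyMeasurable ?_
    filter_upwards with W
    rw [Real.norm_eq_abs, abs_of_nonneg (ht0 W)]
    exact htd W
  -- the average of t is d/4
  obtain ⟨X, hX⟩ := exists_conj_compl P hP1 hP2 hPr
  have hXW : ∀ W, t (X * W) = (d : ℝ) / 2 - t W := by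
    intro W
    have h := corr_conj hP1 hP2 hX (hcoeH W)
    have hc : ((X * W : Matrix.unitaryGroup (Fin d) ℂ) : Matrix (Fin d) (Fin d) ℂ)
        = (X : Matrix (Fin d) (Fin d) ℂ) * (W : Matrix (Fin d) (Fin d) ℂ) := rfl
    simp only [ht_def, hc, h, Complex.sub_re]
    rw [hPr]
  have hT : ∫ W, t W ∂μ = (d : ℝ) / 4 := by
    have h1 : ∫ W, t (X * W) ∂μ = ∫ W, t W ∂μ := integral_mul_left_eq_self t X
    have h2 : ∫ W, t (X * W) ∂μ = (d : ℝ) / 2 - ∫ W, t W ∂μ := by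
      simp_rw [hXW]
      rw [integral_sub (integrable_const _) ht_int, integral_const]
      simp
    rw [h2] at h1
    linarith
  -- the one-variable integrand
  set g1 : Matrix.unitaryGroup (Fin d) ℂ → ℝ :=
    fun W => Real.sqrt ((d : ℝ) - 2 * t W) with hg1_def
  have hg1cont : Continuous g1 :=
    Real.continuous_sqrt.comp (continuous_const.sub (continuous_const.mul ht_cont))
  have hg1int : Integrable g1 μ := by
    refine Integrable.mono' (integrable_const (Real.sqrt d)) hg1cont.aestronglyMeasurable ?_
    filter_upwards with W
    rw [Real.norm_eq_abs, abs_of_nonneg (Real.sqrt_nonneg _)]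
    apply Real.sqrt_le_sqrt
    have := ht0 W; linarith
  have hsd : (0 : ℝ) < Real.sqrt d := Real.sqrt_pos.mpr hd0
  have hpt : ∀ W, ((d : ℝ) - 2 * t W) / Real.sqrt d ≤ g1 W := by
    intro W
    rw [div_le_iff₀ hsd]
    calc (d : ℝ) - 2 * t W
        = Real.sqrt ((d : ℝ) - 2 * t W) * Real.sqrt ((d : ℝ) - 2 * t W) :=
          (Real.mul_self_sqrt (hN0 W)).symm
      _ ≤ Real.sqrt ((d : ℝ) - 2 * t W) * Real.sqrt d := by
          refine mul_le_mul_of_nonneg_left ?_ (Real.sqrt_nonneg _)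
          refine Real.sqrt_le_sqrt ?_
          have := ht0 W; linarith
  have hint2 : Integrable (fun W => ((d : ℝ) - 2 * t W) / Real.sqrt d) μ :=
    ((integrable_const _).sub (ht_int.const_mul 2)).div_const _
  have hval : ∫ W, ((d : ℝ) - 2 * t W) / Real.sqrt d ∂μ = Real.sqrt d / 2 := by
    rw [integral_div, integral_sub (integrable_const _) (ht_int.const_mul 2),
      integral_const_mul, hT, integral_const]
    simp only [probReal_univ, measure_univ, ENNReal.toReal_one, one_smul, smul_eq_mul]
    rw [div_eq_div_iff (ne_of_gt hsd) two_ne_zero]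
    have hss : Real.sqrt d * Real.sqrt d = d := Real.mul_self_sqrt hd0.le
    linarith
  have hlow : Real.sqrt d / 2 ≤ ∫ W, g1 W ∂μ := by
    rw [← hval]
    exact integral_mono hint2 hg1int hpt
  -- reduce the double integral to a single one
  have key : ∀ U V : Matrix.unitaryGroup (Fin d) ℂ,
      frobNorm ((U : Matrix (Fin d) (Fin d) ℂ) * P * (U : Matrix (Fin d) (Fin d) ℂ)ᴴ -
        (V : Matrix (Fin d) (Fin d) ℂ) * P * (V : Matrix (Fin d) (Fin d) ℂ)ᴴ)
        = g1 (U⁻¹ * V) := by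
    intro U V
    have hcinv : ((U⁻¹ * V : Matrix.unitaryGroup (Fin d) ℂ) : Matrix (Fin d) (Fin d) ℂ)
        = (U : Matrix (Fin d) (Fin d) ℂ)ᴴ * (V : Matrix (Fin d) (Fin d) ℂ) := by
      rw [show ((U⁻¹ * V : Matrix.unitaryGroup (Fin d) ℂ) : Matrix (Fin d) (Fin d) ℂ)
          = ((U⁻¹ : Matrix.unitaryGroup (Fin d) ℂ) : Matrix (Fin d) (Fin d) ℂ) *
            (V : Matrix (Fin d) (Fin d) ℂ) from rfl]
      rw [show ((U⁻¹ : Matrix.unitaryGroup (Fin d) ℂ) : Matrix (Fin d) (Fin d) ℂ)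
          = star (U : Matrix (Fin d) (Fin d) ℂ) from rfl]
      rw [Matrix.star_eq_conjTranspose]
    have hmat : (U : Matrix (Fin d) (Fin d) ℂ) * P * (U : Matrix (Fin d) (Fin d) ℂ)ᴴ -
        (V : Matrix (Fin d) (Fin d) ℂ) * P * (V : Matrix (Fin d) (Fin d) ℂ)ᴴ =
        (U : Matrix (Fin d) (Fin d) ℂ) *
          (P - ((U⁻¹ * V : Matrix.unitaryGroup (Fin d) ℂ) : Matrix (Fin d) (Fin d) ℂ) * P *
            (((U⁻¹ * V : Matrix.unitaryGroup (Fin d) ℂ) : Matrix (Fin d) (Fin d) ℂ))ᴴ) *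
          (U : Matrix (Fin d) (Fin d) ℂ)ᴴ := by
      rw [hcinv, Matrix.conjTranspose_mul, Matrix.conjTranspose_conjTranspose]
      rw [Matrix.mul_sub, Matrix.sub_mul]
      congr 1
      calc (V : Matrix (Fin d) (Fin d) ℂ) * P * (V : Matrix (Fin d) (Fin d) ℂ)ᴴ
          = ((U : Matrix (Fin d) (Fin d) ℂ) * (U : Matrix (Fin d) (Fin d) ℂ)ᴴ) *
              ((V : Matrix (Fin d) (Fin d) ℂ) * (P * ((V : Matrix (Fin d) (Fin d) ℂ)ᴴ *
                ((U : Matrix (Fin d) (Fin d) ℂ) * (U : Matrix (Fin d) (Fin d) ℂ)ᴴ)))) := by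
            rw [hcoeH2 U, one_mul, mul_one, ← Matrix.mul_assoc]
        _ = (U : Matrix (Fin d) (Fin d) ℂ) *
              ((U : Matrix (Fin d) (Fin d) ℂ)ᴴ * (V : Matrix (Fin d) (Fin d) ℂ) * P *
                ((V : Matrix (Fin d) (Fin d) ℂ)ᴴ * (U : Matrix (Fin d) (Fin d) ℂ))) *
              (U : Matrix (Fin d) (Fin d) ℂ)ᴴ := by
            simp only [Matrix.mul_assoc]
    rw [hmat, frobNorm_conj (hcoeH U), frobNorm_eq_trace, hg1_def]
    rw [hN (U⁻¹ * V)]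
  have main : (∫ U : Matrix.unitaryGroup (Fin d) ℂ, ∫ V : Matrix.unitaryGroup (Fin d) ℂ,
      frobNorm ((U : Matrix (Fin d) (Fin d) ℂ) * P * (U : Matrix (Fin d) (Fin d) ℂ)ᴴ -
        (V : Matrix (Fin d) (Fin d) ℂ) * P * (V : Matrix (Fin d) (Fin d) ℂ)ᴴ) ∂μ ∂μ)
      = ∫ W, g1 W ∂μ := by
    have hinner : ∀ U : Matrix.unitaryGroup (Fin d) ℂ,
        (∫ V : Matrix.unitaryGroup (Fin d) ℂ,
          frobNorm ((U : Matrix (Fin d) (Fin d) ℂ) * P * (U : Matrix (Fin d) (Fin d) ℂ)ᴴ -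
            (V : Matrix (Fin d) (Fin d) ℂ) * P * (V : Matrix (Fin d) (Fin d) ℂ)ᴴ) ∂μ)
          = ∫ W, g1 W ∂μ := by
      intro U
      simp_rw [key U]
      exact integral_mul_left_eq_self g1 U⁻¹
    simp_rw [hinner]
    rw [integral_const]
    simp
  rw [ge_iff_le, main]
  exact hlow
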